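/- arXiv:hep-th/0011267 — 4 statements merged into one kernel-verified Lean document; each statement's English description precedes it below -/
import Mathlib

section
/- Let L be a ℤ/2-graded unital algebra, D, θ odd elements of L, and g an invertible even element of R ⊗ L₊. With θ^g = g⁻¹θg + g⁻¹[D,g] and ω = g⁻¹dg in Ω(R) ⊗̂ L, the BRS relations hold: d(θ^g) = −[D + θ^g, ω] and dω = −ω², where d denotes d ⊗ Id and brackets are graded commutators. -/
/- STATEMENT 7: BRS relations. In the graded tensor product Ω(R) ⊗̂ L (axiomatized
here as a ℤ/2-graded DG algebra W), with D, θ odd, dD = dθ = 0, g invertible even,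
θ^g = g⁻¹θg + g⁻¹[D,g] and ω = g⁻¹dg, one has dθ^g = −[D + θ^g, ω] (graded
commutator of odd elements = anticommutator) and dω = −ω². -/
theorem brs_relations (W : Type) [Ring W] [Algebra ℂ W]
    (𝒲 : ZMod 2 → Submodule ℂ W) (d : W →ₗ[ℂ] W)
    (hdeg : ∀ i, ∀ w ∈ 𝒲 i, d w ∈ 𝒲 (i + 1))
    (hd1 : d 1 = 0)
    (hd2 : ∀ w, d (d w) = 0)
    (hleib0 : ∀ a ∈ 𝒲 0, ∀ b, d (a * b) = d a * b + a * d b)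
    (hleib1 : ∀ a ∈ 𝒲 1, ∀ b, d (a * b) = d a * b - a * d b)
    (D θ : W) (hD : D ∈ 𝒲 1) (hθ : θ ∈ 𝒲 1) (hdD : d D = 0) (hdθ : d θ = 0)
    (g g' : W) (hg : g ∈ 𝒲 0) (hg' : g' ∈ 𝒲 0)
    (hgg' : g * g' = 1) (hg'g : g' * g = 1) :
    d (g' * θ * g + g' * (D * g - g * D))
      = -((D + (g' * θ * g + g' * (D * g - g * D))) * (g' * d g)
          + (g' * d g) * (D + (g' * θ * g + g' * (D * g - g * D)))) ∧
    d (g' * d g) = -((g' * d g) * (g' * d g)) := by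
  have k1 : ∀ x : W, g * (g' * x) = x := fun x => by
    rw [← mul_assoc, hgg', one_mul]
  have k2 : ∀ x : W, g' * (g * x) = x := fun x => by
    rw [← mul_assoc, hg'g, one_mul]
  have hdg' : d g' = -(g' * d g * g') := by
    have h0 : d (g' * g) = 0 := by rw [hg'g, hd1]
    have h1 : d g' * g + g' * d g = 0 := by rw [← hleib0 g' hg' g, h0]
    have h2 : d g' * g = -(g' * d g) := by
      have := eq_neg_of_add_eq_zero_left h1
      exact this
    calc d g' = d g' * (g * g') := by rw [hgg', mul_one]
      _ = (d g' * g) * g' := by rw [mul_assoc]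
      _ = -(g' * d g) * g' := by rw [h2]
      _ = -(g' * d g * g') := by rw [neg_mul]
  have hdθg : d (θ * g) = -(θ * d g) := by
    rw [hleib1 θ hθ g, hdθ, zero_mul, zero_sub]
  have hdDg : d (D * g) = -(D * d g) := by
    rw [hleib1 D hD g, hdD, zero_mul, zero_sub]
  have hdgD : d (g * D) = d g * D := by
    rw [hleib0 g hg D, hdD, mul_zero, add_zero]
  constructor
  · have e1 : d (g' * θ * g) = -(g' * d g * g') * (θ * g) + g' * -(θ * d g) := by
      rw [mul_assoc, hleib0 g' hg', hdθg, hdg']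
    have e2 : d (g' * (D * g - g * D))
        = -(g' * d g * g') * (D * g - g * D) + g' * (-(D * d g) - d g * D) := by
      rw [hleib0 g' hg', hdg', map_sub, hdDg, hdgD]
    rw [map_add, e1, e2]
    simp only [mul_add, add_mul, mul_sub, sub_mul, mul_neg, neg_mul, neg_add,
      neg_sub, neg_neg, mul_assoc, k1, k2, hgg', hg'g, mul_one, one_mul]
    abel
  · have e : d (g' * d g) = -(g' * d g * g') * d g + g' * d (d g) := by
      rw [hleib0 g' hg', hdg']
    rw [e, hd2, mul_zero, add_zero]
    simp only [neg_mul, mul_assoc]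
end

section
/- With superconnection ∇ = d + D + t(ω + θ^g), the curvature ∇² := d(D + t(ω+θ^g)) + (D + t(ω+θ^g))² equals (t² − t)(ω² + [ω, θ^g]) + (D + t θ^g)². In particular for t = 0 and t = 1 the curvature lies in R ⊗ L₊ (the 'Russian formula'): ∇²|_{t=0} = D² and ∇²|_{t=1} = (D + θ^g)². -/
/- STATEMENT 10: With the superconnection ∇ = d + D + t(ω + θ^g), the curvature
∇² = d(D + t(ω+θ^g)) + (D + t(ω+θ^g))² equals (t² − t)(ω² + [ω,θ^g]) + (D + tθ^g)².
In particular ∇²|_(t=0) = D² and ∇²|_(t=1) = (D + θ^g)² (the "Russian formula"). -/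
theorem superconnection_curvature (W : Type) [Ring W] [Algebra ℂ W]
    (𝒲 : ZMod 2 → Submodule ℂ W) (d : W →ₗ[ℂ] W)
    (hdeg : ∀ i, ∀ w ∈ 𝒲 i, d w ∈ 𝒲 (i + 1))
    (hd1 : d 1 = 0)
    (hd2 : ∀ w, d (d w) = 0)
    (hleib0 : ∀ a ∈ 𝒲 0, ∀ b, d (a * b) = d a * b + a * d b)
    (hleib1 : ∀ a ∈ 𝒲 1, ∀ b, d (a * b) = d a * b - a * d b)
    (D θ : W) (hD : D ∈ 𝒲 1) (hθ : θ ∈ 𝒲 1) (hdD : d D = 0) (hdθ : d θ = 0)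
    (g g' : W) (hg : g ∈ 𝒲 0) (hg' : g' ∈ 𝒲 0)
    (hgg' : g * g' = 1) (hg'g : g' * g = 1) (t : ℂ) :
    let ω := g' * d g
    let θg := g' * θ * g + g' * (D * g - g * D)
    (d (D + t • (ω + θg)) + (D + t • (ω + θg)) * (D + t • (ω + θg))
        = (t ^ 2 - t) • (ω * ω + (ω * θg + θg * ω)) + (D + t • θg) * (D + t • θg)) ∧
    (d D + D * D = D * D) ∧
    (d (D + (ω + θg)) + (D + (ω + θg)) * (D + (ω + θg)) = (D + θg) * (D + θg)) := by
  intro ω θg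
  have hω : ω = g' * d g := rfl
  have hθg : θg = g' * θ * g + g' * (D * g - g * D) := rfl
  -- derivative of the inverse
  have hdg' : d g' = -(g' * d g * g') := by
    have h0 : d g' * g + g' * d g = 0 := by
      rw [← hleib0 g' hg' g, hg'g, hd1]
    have h1 : d g' * g = -(g' * d g) := by
      rw [eq_neg_iff_add_eq_zero]; exact h0
    calc d g' = (d g' * g) * g' := by rw [mul_assoc, hgg', mul_one]
      _ = -(g' * d g * g') := by rw [h1]; noncomm_ring
  -- Maurer–Cartan: dω = -ω²
  have hdω : d ω = -(ω * ω) := by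
    rw [hω, hleib0 g' hg' (d g), hd2 g, mul_zero, add_zero, hdg']
    noncomm_ring
  -- BRS relation: dθg = -[D+θg, ω]
  have hdθg : d θg = -((D + θg) * ω + ω * (D + θg)) := by
    have e1 : (D + θg) * ω + ω * (D + θg)
        = g' * θ * d g + g' * D * d g + g' * d g * (g' * θ * g)
          + g' * d g * (g' * D * g) := by
      calc (D + θg) * ω + ω * (D + θg)
          = D * (g' * d g)
            + (g' * θ * (g * g') * d g + g' * D * (g * g') * d g
              - (g' * g) * (D * (g' * d g)))
            + ((g' * d g) * (g' * θ * g) + (g' * d g) * (g' * D * g)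
              + (g' * d g) * D - (g' * d g) * ((g' * g) * D)) := by
            rw [hω, hθg]; noncomm_ring
        _ = _ := by rw [hgg', hg'g]; noncomm_ring
    have expand : d θg = -(g' * (d g * (g' * (θ * g)))) - g' * (θ * d g)
        + (-(g' * (d g * (g' * (D * g)))) + g' * (d g * ((g' * g) * D))
          - g' * (D * d g) - g' * (d g * D)) := by
      rw [hθg, map_add, mul_assoc g' θ g, hleib0 g' hg' (θ * g),
        hleib0 g' hg' (D * g - g * D), hleib1 θ hθ g, hdθ, map_sub,
        hleib1 D hD g, hleib0 g hg D, hdD, hdg']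
      noncomm_ring
    rw [expand, hg'g, e1]
    noncomm_ring
  refine ⟨?_, ?_, ?_⟩
  · rw [map_add, map_smul, map_add, hdD, hdω, hdθg]
    simp only [smul_add, smul_neg, mul_add, add_mul, mul_smul_comm,
      smul_mul_assoc, smul_smul, smul_sub, sub_smul]
    module
  · rw [hdD, zero_add]
  · rw [map_add, map_add, hdD, hdω, hdθg]
    noncomm_ring
end

section
/- Let A be a unital ℂ-algebra and g ∈ A invertible (or more generally g ∈ A ⊗ L₊ invertible). In the quotient Rₙ = RA/IA^{n+1} ≅ ⊕_{k=0}^{n} Ω^{2k}(A) with the induced Fedosov product, the element gₙ (the image of g) is invertible with inverse (gₙ)⁻¹ = Σ_{k=0}^{n} g⁻¹ (dg dg⁻¹)^k. -/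
/-- Alternating list `[x, y, x, y, ...]` of length `2*k`. -/
def altList {A : Type} (x y : A) : ℕ → List A
  | 0 => []
  | (k+1) => x :: y :: altList x y k

theorem altList_length {A : Type} (x y : A) (k : ℕ) : (altList x y k).length = 2 * k := by
  induction k with
  | zero => rfl
  | succ k ih => simp [altList, ih]; ring

theorem altList_prod {A Ω : Type} [Ring A] [Algebra ℂ A] [Ring Ω] [Algebra ℂ Ω]
    (ι : A →ₐ[ℂ] Ω) (d : Ω →ₗ[ℂ] Ω) (x y : A) (k : ℕ) :
    ((altList x y k).map (fun z => d (ι z))).prod = (d (ι x) * d (ι y)) ^ k := by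
  induction k with
  | zero => simp [altList]
  | succ k ih => simp only [altList, List.map_cons, List.prod_cons, ih, pow_succ']; noncomm_ring

/- STATEMENT 13: In the quotient Rₙ = RA/IA^(n+1) ≅ ⊕_(k≤n) Ω^(2k)(A) with the
truncated Fedosov product, the image gₙ of an invertible g ∈ A is invertible with
inverse Σ_(k=0)^n g⁻¹(dg dg⁻¹)^k: the Fedosov products g ∘ s and s ∘ g differ from 1
only by forms of degree > 2n (i.e. modulo ⊕_(k>n) Ω^(2k)(A), which is IA^(n+1)). -/
theorem truncated_inverse_in_quotient (A Ω : Type) [Ring A] [Algebra ℂ A] [Ring Ω] [Algebra ℂ Ω]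
    (ι : A →ₐ[ℂ] Ω) (d : Ω →ₗ[ℂ] Ω) (𝒜 : ℕ → Submodule ℂ Ω)
    (hgrade : ∀ n, 𝒜 n = Submodule.span ℂ
      {w | ∃ (x₀ : A) (l : List A), l.length = n ∧ w = ι x₀ * (l.map (fun x => d (ι x))).prod})
    (htop : (⨆ n, 𝒜 n) = (⊤ : Submodule ℂ Ω))
    (hd1 : d 1 = 0)
    (hdrule : ∀ (x₀ : A) (l : List A),
      d (ι x₀ * (l.map (fun x => d (ι x))).prod) = d (ι x₀) * (l.map (fun x => d (ι x))).prod)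
    (hbase : ∀ x y : A, d (ι x) * ι y = d (ι (x * y)) - ι x * d (ι y))
    (hdeg : ∀ n, ∀ w ∈ 𝒜 n, d w ∈ 𝒜 (n + 1))
    (hmul : ∀ m n, ∀ a ∈ 𝒜 m, ∀ b ∈ 𝒜 n, a * b ∈ 𝒜 (m + n))
    (hd2 : ∀ w, d (d w) = 0)
    (hleib : ∀ n, ∀ a ∈ 𝒜 n, ∀ b, d (a * b) = d a * b + ((-1 : ℂ) ^ n) • (a * d b))
    (g g' : A) (hgg' : g * g' = 1) (hg'g : g' * g = 1) (n : ℕ) :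
    (ι g * (∑ k ∈ Finset.range (n + 1), ι g' * (d (ι g) * d (ι g')) ^ k)
        - d (ι g) * d (∑ k ∈ Finset.range (n + 1), ι g' * (d (ι g) * d (ι g')) ^ k)) - 1
      ∈ (⨆ k, 𝒜 (2 * (n + 1) + 2 * k)) ∧
    ((∑ k ∈ Finset.range (n + 1), ι g' * (d (ι g) * d (ι g')) ^ k) * ι g
        - d (∑ k ∈ Finset.range (n + 1), ι g' * (d (ι g) * d (ι g')) ^ k) * d (ι g)) - 1
      ∈ (⨆ k, 𝒜 (2 * (n + 1) + 2 * k)) := by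
  set a := ι g with ha
  set b := ι g' with hb
  set e := d a with he
  set f := d b with hf
  have hab : a * b = 1 := by rw [ha, hb, ← map_mul, hgg', map_one]
  have hba : b * a = 1 := by rw [ha, hb, ← map_mul, hg'g, map_one]
  have heb : e * b = -(a * f) := by
    have h := hbase g g'
    rw [hgg', map_one, hd1, zero_sub] at h
    exact h
  have hfa : f * a = -(b * e) := by
    have h := hbase g' g
    rw [hg'g, map_one, hd1, zero_sub] at h
    exact h
  -- d of each summand
  have hds : ∀ k : ℕ, d (b * (e * f) ^ k) = f * (e * f) ^ k := by
    intro k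
    have h := hdrule g' (altList g g' k)
    rw [altList_prod ι d g g' k] at h
    exact h
  -- commutation
  have hcomm : ∀ k : ℕ, (e * f) ^ k * a = a * (f * e) ^ k := by
    intro k
    induction k with
    | zero => simp
    | succ k ih =>
      have hefa : e * f * a = a * (f * e) := by
        rw [mul_assoc, hfa, mul_neg, ← mul_assoc, heb]
        noncomm_ring
      rw [pow_succ, mul_assoc, hefa, ← mul_assoc, ih, mul_assoc, ← pow_succ]
  have hswap : ∀ k : ℕ, f * (e * f) ^ k = (f * e) ^ k * f := by
    intro k
    induction k with
    | zero => simp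
    | succ k ih =>
      calc f * (e * f) ^ (k + 1) = f * e * (f * (e * f) ^ k) := by
            rw [pow_succ']; noncomm_ring
        _ = f * e * ((f * e) ^ k * f) := by rw [ih]
        _ = (f * e) ^ (k + 1) * f := by rw [pow_succ']; noncomm_ring
  -- membership helper
  have hmem : ∀ (x y : A) (m : ℕ),
      (d (ι x) * d (ι y)) ^ m ∈ (⨆ k, 𝒜 (2 * m + 2 * k)) := by
    intro x y m
    have h1 : (d (ι x) * d (ι y)) ^ m ∈ 𝒜 (2 * m) := by
      rw [hgrade]
      apply Submodule.subset_span
      exact ⟨1, altList x y m, altList_length x y m,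
        by rw [altList_prod ι d x y m, map_one, one_mul]⟩
    have h2 : 𝒜 (2 * m) ≤ ⨆ k, 𝒜 (2 * m + 2 * k) := by
      have := le_iSup (fun k => 𝒜 (2 * m + 2 * k)) 0
      simpa using this
    exact h2 h1
  constructor
  · -- first part
    have key : (a * (∑ k ∈ Finset.range (n + 1), b * (e * f) ^ k)
        - e * d (∑ k ∈ Finset.range (n + 1), b * (e * f) ^ k)) - 1
        = -((e * f) ^ (n + 1)) := by
      rw [map_sum, Finset.mul_sum]
      have hd' : ∀ k ∈ Finset.range (n + 1), d (b * (e * f) ^ k) = f * (e * f) ^ k :=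
        fun k _ => hds k
      rw [Finset.sum_congr rfl hd', Finset.mul_sum, ← Finset.sum_sub_distrib]
      have hterm : ∀ k ∈ Finset.range (n + 1),
          a * (b * (e * f) ^ k) - e * (f * (e * f) ^ k)
          = (e * f) ^ k - (e * f) ^ (k + 1) := by
        intro k _
        rw [← mul_assoc, hab, one_mul, ← mul_assoc, ← pow_succ']
      rw [Finset.sum_congr rfl hterm, Finset.sum_range_sub']
      simp
    rw [key]
    exact neg_mem (hmem g g' (n + 1))
  · -- second part
    have key : ((∑ k ∈ Finset.range (n + 1), b * (e * f) ^ k) * a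
        - d (∑ k ∈ Finset.range (n + 1), b * (e * f) ^ k) * e) - 1
        = -((f * e) ^ (n + 1)) := by
      rw [map_sum, Finset.sum_mul]
      have hd' : ∀ k ∈ Finset.range (n + 1), d (b * (e * f) ^ k) = f * (e * f) ^ k :=
        fun k _ => hds k
      rw [Finset.sum_congr rfl hd', Finset.sum_mul, ← Finset.sum_sub_distrib]
      have hterm : ∀ k ∈ Finset.range (n + 1),
          b * (e * f) ^ k * a - f * (e * f) ^ k * e
          = (f * e) ^ k - (f * e) ^ (k + 1) := by
        intro k _
        rw [mul_assoc, hcomm, ← mul_assoc, hba, one_mul, hswap, mul_assoc, ← pow_succ]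
      rw [Finset.sum_congr rfl hterm, Finset.sum_range_sub']
      simp
    rw [key]
    exact neg_mem (hmem g' g (n + 1))
end

section
/- The ideal IA = ker(RA → A) equals ⊕_{n>0} Ω²ⁿ(A), and its (n+1)-st power with respect to the Fedosov product satisfies IA^{n+1} ⊆ ⊕_{k>n} Ω^{2k}(A); hence the quotient RA/IA^{n+1} surjects onto ⊕_{k=0}^{n} Ω^{2k}(A) as a vector space. -/
/- STATEMENT 15: IA = ker(RA → A) equals ⊕_(n>0) Ω²ⁿ(A); its (n+1)-st power for the
Fedosov product lies in ⊕_(k>n) Ω^(2k)(A); hence RA/IA^(n+1) surjects onto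
⊕_(k≤n) Ω^(2k)(A) as a vector space (every even form is a sum of a form of degree
≤ 2n and a form of degree > 2n). π is the degree-zero projection. -/
theorem ideal_IA_and_its_powers (A Ω : Type) [Ring A] [Algebra ℂ A] [Ring Ω] [Algebra ℂ Ω]
    (ι : A →ₐ[ℂ] Ω) (d : Ω →ₗ[ℂ] Ω) (𝒜 : ℕ → Submodule ℂ Ω)
    (hgrade : ∀ n, 𝒜 n = Submodule.span ℂ
      {w | ∃ (x₀ : A) (l : List A), l.length = n ∧ w = ι x₀ * (l.map (fun x => d (ι x))).prod})
    (htop : (⨆ n, 𝒜 n) = (⊤ : Submodule ℂ Ω))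
    (hd1 : d 1 = 0)
    (hdrule : ∀ (x₀ : A) (l : List A),
      d (ι x₀ * (l.map (fun x => d (ι x))).prod) = d (ι x₀) * (l.map (fun x => d (ι x))).prod)
    (hbase : ∀ x y : A, d (ι x) * ι y = d (ι (x * y)) - ι x * d (ι y))
    (hdeg : ∀ n, ∀ w ∈ 𝒜 n, d w ∈ 𝒜 (n + 1))
    (hmul : ∀ m n, ∀ a ∈ 𝒜 m, ∀ b ∈ 𝒜 n, a * b ∈ 𝒜 (m + n))
    (hd2 : ∀ w, d (d w) = 0)
    (hleib : ∀ n, ∀ a ∈ 𝒜 n, ∀ b, d (a * b) = d a * b + ((-1 : ℂ) ^ n) • (a * d b))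
    (π : Ω →ₗ[ℂ] Ω)
    (hπ : ∀ n, ∀ w ∈ 𝒜 n, π w = if n = 0 then w else 0) :
    ((⨆ k, 𝒜 (2 * k)) ⊓ LinearMap.ker π = ⨆ k, 𝒜 (2 * (k + 1))) ∧
    (∀ n : ℕ, ∀ l : List Ω, l.length = n + 1 →
      (∀ w ∈ l, w ∈ (⨆ k, 𝒜 (2 * k)) ⊓ LinearMap.ker π) →
      l.foldr (fun a b => a * b - d a * d b) 1 ∈ ⨆ k, 𝒜 (2 * (n + 1) + 2 * k)) ∧
    (∀ n : ℕ, (⨆ k, 𝒜 (2 * k)) ≤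
      (⨆ k ∈ Finset.range (n + 1), 𝒜 (2 * k)) ⊔ ⨆ k, 𝒜 (2 * (n + 1) + 2 * k)) := by
  -- a conversion lemma for suprema over reindexed degree families
  have hconv : ∀ f g : ℕ → ℕ, (∀ k, ∃ j, f k = g j) →
      (⨆ k, 𝒜 (f k)) ≤ ⨆ k, 𝒜 (g k) := by
    intro f g h
    refine iSup_le fun k => ?_
    obtain ⟨j, hj⟩ := h k
    rw [hj]
    exact le_iSup (fun k => 𝒜 (g k)) j
  -- multiplication of "offset" even suprema
  have hSmul : ∀ r s : ℕ, ∀ a ∈ (⨆ k, 𝒜 (r + 2 * k)), ∀ b ∈ (⨆ k, 𝒜 (s + 2 * k)),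
      a * b ∈ ⨆ k, 𝒜 (r + s + 2 * k) := by
    intro r s a ha b hb
    have hle : (⨆ k, 𝒜 (r + 2 * k)) * (⨆ k, 𝒜 (s + 2 * k)) ≤ ⨆ k, 𝒜 (r + s + 2 * k) := by
      rw [Submodule.iSup_mul]
      refine iSup_le fun i => ?_
      rw [Submodule.mul_iSup]
      refine iSup_le fun j => ?_
      refine Submodule.mul_le.2 fun x hx y hy => ?_
      have hxy := hmul _ _ x hx y hy
      have he : r + 2 * i + (s + 2 * j) = r + s + 2 * (i + j) := by ring
      rw [he] at hxy
      exact Submodule.mem_iSup_of_mem (i + j) hxy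
    exact hle (Submodule.mul_mem_mul ha hb)
  -- d raises the offset by one
  have hdS : ∀ r : ℕ, ∀ a ∈ (⨆ k, 𝒜 (r + 2 * k)), d a ∈ ⨆ k, 𝒜 (r + 1 + 2 * k) := by
    intro r a ha
    have hle : Submodule.map d (⨆ k, 𝒜 (r + 2 * k)) ≤ ⨆ k, 𝒜 (r + 1 + 2 * k) := by
      rw [Submodule.map_iSup]
      refine iSup_le fun i => ?_
      refine le_trans (Submodule.map_le_iff_le_comap.2 fun x hx => ?_) (le_refl _)
      have := hdeg _ x hx
      have he : r + 2 * i + 1 = r + 1 + 2 * i := by ring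
      rw [he] at this
      exact Submodule.mem_iSup_of_mem i this
    exact hle ⟨a, ha, rfl⟩
  -- Fedosov product of offset-m and offset-p elements lands in offset-(m+p)
  have hfed : ∀ m p : ℕ, ∀ a ∈ (⨆ k, 𝒜 (2 * m + 2 * k)), ∀ b ∈ (⨆ k, 𝒜 (2 * p + 2 * k)),
      a * b - d a * d b ∈ ⨆ k, 𝒜 (2 * (m + p) + 2 * k) := by
    intro m p a ha b hb
    have h1 : a * b ∈ ⨆ k, 𝒜 (2 * m + 2 * p + 2 * k) := hSmul _ _ a ha b hb
    have h1' : a * b ∈ ⨆ k, 𝒜 (2 * (m + p) + 2 * k) := by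
      refine hconv _ _ (fun k => ⟨k, by ring⟩) h1
    have h2 : d a * d b ∈ ⨆ k, 𝒜 (2 * m + 1 + (2 * p + 1) + 2 * k) :=
      hSmul _ _ (d a) (hdS _ a ha) (d b) (hdS _ b hb)
    have h2' : d a * d b ∈ ⨆ k, 𝒜 (2 * (m + p) + 2 * k) := by
      refine hconv _ _ (fun k => ⟨k + 1, by ring⟩) h2
    exact sub_mem h1' h2'
  -- 1 ∈ 𝒜 0
  have hone : (1 : Ω) ∈ 𝒜 0 := by
    rw [hgrade]
    refine Submodule.subset_span ⟨1, [], rfl, by simp⟩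
  -- Part 1
  have part1 : (⨆ k, 𝒜 (2 * k)) ⊓ LinearMap.ker π = ⨆ k, 𝒜 (2 * (k + 1)) := by
    apply le_antisymm
    · intro w hw0
      obtain ⟨hw, hker⟩ := Submodule.mem_inf.1 hw0
      rw [Submodule.mem_iSup_iff_exists_finsupp] at hw
      obtain ⟨f, hf, hsum⟩ := hw
      have hπw : π w = f 0 := by
        rw [← hsum, map_finsuppSum]
        have : (f.sum fun i xi => π xi) = f.sum fun i xi => if i = 0 then f i else 0 := by
          refine Finset.sum_congr rfl fun i hi => ?_
          dsimp only
          rw [hπ _ _ (hf i)]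
          by_cases h : i = 0 <;> simp [h]
        rw [this]
        unfold Finsupp.sum
        rw [Finset.sum_ite_eq' f.support 0 f]
        by_cases h : (0 : ℕ) ∈ f.support
        · simp [h]
        · simp [h, Finsupp.notMem_support_iff.1 h]
      have hf0 : f 0 = 0 := by
        rw [← hπw]; exact LinearMap.mem_ker.1 hker
      rw [← hsum]
      refine Submodule.sum_mem _ fun i hi => ?_
      rcases Nat.eq_zero_or_pos i with h0 | hpos
      · subst h0; rw [hf0]; exact zero_mem _
      · have : f i ∈ 𝒜 (2 * ((i - 1) + 1)) := by
          have he : 2 * ((i - 1) + 1) = 2 * i := by omega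
          rw [he]; exact hf i
        exact Submodule.mem_iSup_of_mem (i - 1) this
    · refine iSup_le fun k => le_inf ?_ ?_
      · exact le_iSup (fun k => 𝒜 (2 * k)) (k + 1)
      · intro w hw
        rw [LinearMap.mem_ker, hπ _ _ hw]
        simp
  refine ⟨part1, ?_, ?_⟩
  · -- Part 2
    have hIA : ((⨆ k, 𝒜 (2 * k)) ⊓ LinearMap.ker π : Submodule ℂ Ω) ≤
        ⨆ k, 𝒜 (2 * 1 + 2 * k) := by
      rw [part1]
      exact hconv _ _ fun k => ⟨k, by ring⟩
    have key : ∀ l : List Ω, (∀ w ∈ l, w ∈ (⨆ k, 𝒜 (2 * k)) ⊓ LinearMap.ker π) →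
        l.foldr (fun a b => a * b - d a * d b) 1 ∈ ⨆ k, 𝒜 (2 * l.length + 2 * k) := by
      intro l
      induction l with
      | nil =>
        intro _
        simp only [List.foldr_nil, List.length_nil]
        exact Submodule.mem_iSup_of_mem 0 (by simpa using hone)
      | cons a t ih =>
        intro hmem
        have ha : a ∈ ⨆ k, 𝒜 (2 * 1 + 2 * k) := hIA (hmem a List.mem_cons_self)
        have ht := ih fun w hw => hmem w (List.mem_cons_of_mem a hw)
        have := hfed 1 t.length a ha _ ht
        simp only [List.foldr_cons, List.length_cons]
        have he : (1 + t.length) = t.length + 1 := by ring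
        rw [he] at this
        exact this
    intro n l hlen hmem
    have := key l hmem
    rw [hlen] at this
    exact this
  · -- Part 3
    intro n
    refine iSup_le fun k => ?_
    rcases le_or_gt k n with h | h
    · refine le_trans ?_ le_sup_left
      exact le_iSup_of_le k (le_iSup_of_le (Finset.mem_range.2 (by omega)) le_rfl)
    · refine le_trans ?_ le_sup_right
      have he : 2 * k = 2 * (n + 1) + 2 * (k - n - 1) := by omega
      rw [he]
      exact le_iSup (fun j => 𝒜 (2 * (n + 1) + 2 * j)) (k - n - 1)
end
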